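/- Let P and Q be distributions on Y satisfying P(A) ≤ e^ε·Q(A) + δ and Q(A) ≤ e^ε·P(A) + δ for all measurable A. Then there exists a randomized function E : Y → {0,1} such that: (1) for X ~ Bernoulli(p) and Y drawn from P if X=1 and Q if X=0, the conditional probability P[X=1 ∧ E(Y)=1 | Y=y] ≤ p/(p + (1-p)e^{-ε}) for all y; and (2) E[E(Y)] ≥ 1-δ under both Y ~ P and Y ~ Q. -/

import Mathlib

open MeasureTheory Real

/-- **Bayesian decomposition lemma.** If `P(A) ≤ eᵉ·Q(A) + δ` and `Q(A) ≤ eᵉ·P(A) + δ` for all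
measurable `A`, then there is a randomized function `E : Y → {0,1}` — formalized by its
acceptance probability `e : Y → [0,1]` — such that:
(1) for `X ~ Bernoulli(p)` and `Y ~ P` if `X = 1`, `Y ~ Q` if `X = 0` (so the marginal of `Y` is
the mixture `μ = p·P + (1-p)·Q`), the conditional probability
`P[X = 1 ∧ E(Y) = 1 ∣ Y = y] = p·(dP/dμ)(y)·e(y)` is at most `p/(p + (1-p)e⁻ᵉ)` for
(almost) every `y`; and
(2) `E[E(Y)] ≥ 1 - δ` under both `Y ~ P` and `Y ~ Q`. -/
theorem bayesian_decomposition {Y : Type*} [MeasurableSpace Y]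
    (P Q : Measure Y) [IsProbabilityMeasure P] [IsProbabilityMeasure Q]
    (ε δ : ℝ) (hε : 0 ≤ ε) (hδ : 0 ≤ δ) (p : ℝ) (hp0 : 0 ≤ p) (hp1 : p ≤ 1)
    (hPQ : ∀ A : Set Y, MeasurableSet A → P A ≤ ENNReal.ofReal (exp ε) * Q A + ENNReal.ofReal δ)
    (hQP : ∀ A : Set Y, MeasurableSet A → Q A ≤ ENNReal.ofReal (exp ε) * P A + ENNReal.ofReal δ) :
    ∃ e : Y → ℝ, Measurable e ∧ (∀ y, 0 ≤ e y ∧ e y ≤ 1) ∧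
      (∀ᵐ y ∂(ENNReal.ofReal p • P + ENNReal.ofReal (1 - p) • Q),
        p * (P.rnDeriv (ENNReal.ofReal p • P + ENNReal.ofReal (1 - p) • Q) y).toReal * e y
          ≤ p / (p + (1 - p) * exp (-ε))) ∧
      (1 - δ ≤ ∫ y, e y ∂P) ∧ (1 - δ ≤ ∫ y, e y ∂Q) := by
  classical
  rcases eq_or_lt_of_le hp0 with hp0' | hp0'
  · -- p = 0 : take e ≡ 1
    refine ⟨fun _ => 1, measurable_const, fun y => ⟨zero_le_one, le_rfl⟩, ?_, ?_, ?_⟩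
    · refine Filter.Eventually.of_forall fun y => ?_
      rw [← hp0']
      simp
    · simp only [integral_const, probReal_univ, ENNReal.toReal_one, smul_eq_mul, mul_one]
      linarith
    · simp only [integral_const, probReal_univ, ENNReal.toReal_one, smul_eq_mul, mul_one]
      linarith
  rcases eq_or_lt_of_le hp1 with hp1' | hp1'
  · -- p = 1 : take e ≡ 1
    subst hp1'
    refine ⟨fun _ => 1, measurable_const, fun y => ⟨zero_le_one, le_rfl⟩, ?_, ?_, ?_⟩
    · have hμ : ENNReal.ofReal 1 • P + ENNReal.ofReal (1 - 1) • Q = P := by simp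
      rw [hμ]
      filter_upwards [Measure.rnDeriv_self P] with y hy
      rw [hy]
      simp
    · simp only [integral_const, probReal_univ, ENNReal.toReal_one, smul_eq_mul, mul_one]
      linarith
    · simp only [integral_const, probReal_univ, ENNReal.toReal_one, smul_eq_mul, mul_one]
      linarith
  -- main case 0 < p < 1
  set a := ENNReal.ofReal p with ha
  set b := ENNReal.ofReal (1 - p) with hb
  set μ : Measure Y := a • P + b • Q with hμdef
  have hp1p : (0:ℝ) < 1 - p := by linarith
  have hd : (0:ℝ) < p + (1 - p) * exp (-ε) := by positivity
  set c : ℝ := (p + (1 - p) * exp (-ε))⁻¹ with hcdef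
  have hc0 : 0 < c := inv_pos.mpr hd
  have hcd : c * (p + (1 - p) * exp (-ε)) = 1 := inv_mul_cancel₀ hd.ne'
  have hpc1 : p * c ≤ 1 := by
    rw [hcdef, ← div_eq_mul_inv, div_le_one hd]
    nlinarith [exp_pos (-ε)]
  have h_id : 1 - p * c = (1 - p) * (exp (-ε) * c) := by linear_combination -hcd
  have ha0 : a ≠ 0 := by simp [ha, hp0'.le]; exact hp0'
  have hb0 : b ≠ 0 := by simp [hb]; linarith
  have haT : a ≠ ⊤ := ENNReal.ofReal_ne_top
  have hbT : b ≠ ⊤ := ENNReal.ofReal_ne_top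
  haveI haP : IsFiniteMeasure (a • P) := by
    constructor
    simp only [Measure.smul_apply, smul_eq_mul, measure_univ, mul_one]
    exact haT.lt_top
  haveI hbQ : IsFiniteMeasure (b • Q) := by
    constructor
    simp only [Measure.smul_apply, smul_eq_mul, measure_univ, mul_one]
    exact hbT.lt_top
  haveI hμfin : IsFiniteMeasure μ := by
    rw [hμdef]; infer_instance
  have hPμ : P ≪ μ := by
    refine Measure.AbsolutelyContinuous.mk fun s hs h0 => ?_
    have h1 : a * P s + b * Q s = 0 := by
      simpa [hμdef, Measure.add_apply, Measure.smul_apply, smul_eq_mul] using h0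
    have h2 : a * P s = 0 := by
      rcases add_eq_zero.mp h1 with ⟨h2, _⟩
      exact h2
    rcases mul_eq_zero.mp h2 with h | h
    · exact absurd h ha0
    · exact h
  have hQμ : Q ≪ μ := by
    refine Measure.AbsolutelyContinuous.mk fun s hs h0 => ?_
    have h1 : a * P s + b * Q s = 0 := by
      simpa [hμdef, Measure.add_apply, Measure.smul_apply, smul_eq_mul] using h0
    have h2 : b * Q s = 0 := by
      rcases add_eq_zero.mp h1 with ⟨_, h2⟩
      exact h2
    rcases mul_eq_zero.mp h2 with h | h
    · exact absurd h hb0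
    · exact h
  set f := P.rnDeriv μ with hf
  set g := Q.rnDeriv μ with hg
  have hfm : Measurable f := Measure.measurable_rnDeriv P μ
  have hgm : Measurable g := Measure.measurable_rnDeriv Q μ
  have h_sum : ∀ᵐ y ∂μ, a * f y + b * g y = 1 := by
    have h1 : μ.rnDeriv μ =ᵐ[μ] fun _ => 1 := Measure.rnDeriv_self μ
    have h2 := Measure.rnDeriv_add (a • P) (b • Q) μ
    have h3 := Measure.rnDeriv_smul_left_of_ne_top P μ haT
    have h4 := Measure.rnDeriv_smul_left_of_ne_top Q μ hbT
    rw [← hμdef] at h2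
    filter_upwards [h1, h2, h3, h4] with y hy1 hy2 hy3 hy4
    calc a * f y + b * g y = (a • P).rnDeriv μ y + (b • Q).rnDeriv μ y := by
          rw [hy3, hy4]; simp [smul_eq_mul]; rfl
      _ = μ.rnDeriv μ y := hy2.symm
      _ = 1 := hy1
  set S : Set Y := {y | c < (f y).toReal} with hSdef
  have hSm : MeasurableSet S := measurableSet_lt measurable_const hfm.ennreal_toReal
  set e : Y → ℝ := fun y => if (f y).toReal ≤ c then 1 else c / (f y).toReal with he
  have hem : Measurable e :=
    Measurable.ite (measurableSet_le hfm.ennreal_toReal measurable_const) measurable_const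
      (measurable_const.div hfm.ennreal_toReal)
  have he01 : ∀ y, 0 ≤ e y ∧ e y ≤ 1 := by
    intro y
    rw [he]
    dsimp only
    split_ifs with h
    · exact ⟨zero_le_one, le_rfl⟩
    · push_neg at h
      have ht0 : (0:ℝ) < (f y).toReal := hc0.trans h
      exact ⟨div_nonneg hc0.le ht0.le, (div_le_one ht0).mpr h.le⟩
  -- pointwise bounds on S
  have hgf : ∀ᵐ y ∂μ, y ∈ S →
      g y ≤ ENNReal.ofReal (exp (-ε) * c) ∧ ENNReal.ofReal c ≤ f y := by
    filter_upwards [h_sum, Measure.rnDeriv_lt_top P μ] with y hsum hfin hyS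
    have ht : c < (f y).toReal := hyS
    have hfin' : f y ≠ ⊤ := hfin.ne
    have hcf : ENNReal.ofReal c ≤ f y := by
      rw [← ENNReal.ofReal_toReal hfin']
      exact ENNReal.ofReal_le_ofReal ht.le
    refine ⟨?_, hcf⟩
    have h1 : a * ENNReal.ofReal c ≤ 1 := by
      rw [ha, ← ENNReal.ofReal_mul hp0, ← ENNReal.ofReal_one]
      exact ENNReal.ofReal_le_ofReal hpc1
    have h2 : b * g y ≤ 1 - a * ENNReal.ofReal c := by
      refine ENNReal.le_sub_of_add_le_right (ENNReal.mul_ne_top haT ENNReal.ofReal_ne_top) ?_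
      calc b * g y + a * ENNReal.ofReal c ≤ b * g y + a * f y := by
            exact add_le_add_right (mul_le_mul_right hcf a) _
        _ = a * f y + b * g y := add_comm _ _
        _ = 1 := hsum
    have h3 : b * g y ≤ ENNReal.ofReal (1 - p * c) := by
      refine h2.trans ?_
      rw [ha, ← ENNReal.ofReal_mul hp0, ← ENNReal.ofReal_one,
        ← ENNReal.ofReal_sub _ (mul_nonneg hp0 hc0.le)]
    have h4 : g y ≤ ENNReal.ofReal (1 - p * c) / b := by
      rw [ENNReal.le_div_iff_mul_le (Or.inl hb0) (Or.inl hbT), mul_comm]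
      exact h3
    refine h4.trans ?_
    rw [hb, ← ENNReal.ofReal_div_of_pos hp1p]
    refine ENNReal.ofReal_le_ofReal ?_
    rw [h_id, mul_div_cancel_left₀ _ hp1p.ne']
  -- condition (1) holds pointwise
  have hcond : ∀ y, p * (f y).toReal * e y ≤ p / (p + (1 - p) * exp (-ε)) := by
    intro y
    have hrhs : p / (p + (1 - p) * exp (-ε)) = p * c := by
      rw [hcdef, div_eq_mul_inv]
    rw [hrhs, he]
    dsimp only
    split_ifs with h
    · calc p * (f y).toReal * 1 = p * (f y).toReal := mul_one _
        _ ≤ p * c := mul_le_mul_of_nonneg_left h hp0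
    · push_neg at h
      have ht0 : (0:ℝ) < (f y).toReal := hc0.trans h
      have hcc : (f y).toReal * (c / (f y).toReal) = c := by field_simp
      rw [mul_assoc, hcc]
  -- key integral bound
  have hL : ∫⁻ y in S, ENNReal.ofReal (1 - e y) * f y ∂μ ≤ ENNReal.ofReal δ := by
    have hsub : ∀ᵐ y ∂μ, y ∈ S →
        ENNReal.ofReal (1 - e y) * f y ≤ f y - ENNReal.ofReal (exp ε) * g y := by
      filter_upwards [hgf, Measure.rnDeriv_lt_top P μ] with y hy hfin hyS
      obtain ⟨h4, hcf⟩ := hy hyS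
      have ht : c < (f y).toReal := hyS
      have ht0 : (0:ℝ) < (f y).toReal := hc0.trans ht
      have hey : e y = c / (f y).toReal := by
        rw [he]; exact if_neg (not_le.mpr ht)
      have hfin' : f y ≠ ⊤ := hfin.ne
      have hkey : ENNReal.ofReal (1 - e y) * f y = f y - ENNReal.ofReal c := by
        have h1e : (0:ℝ) ≤ 1 - e y := by linarith [(he01 y).2]
        conv_lhs => rw [← ENNReal.ofReal_toReal hfin']
        rw [← ENNReal.ofReal_mul h1e]
        have : (1 - e y) * (f y).toReal = (f y).toReal - c := by
          rw [hey]; field_simp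
        rw [this, ENNReal.ofReal_sub _ hc0.le, ENNReal.ofReal_toReal hfin']
      have hge : ENNReal.ofReal (exp ε) * g y ≤ ENNReal.ofReal c :=
        calc ENNReal.ofReal (exp ε) * g y
            ≤ ENNReal.ofReal (exp ε) * ENNReal.ofReal (exp (-ε) * c) := mul_le_mul_right h4 _
          _ = ENNReal.ofReal (exp ε * (exp (-ε) * c)) := (ENNReal.ofReal_mul (exp_pos ε).le).symm
          _ = ENNReal.ofReal c := by rw [← mul_assoc, ← exp_add]; simp
      rw [hkey]
      exact tsub_le_tsub_left hge _
    have hle_ae : (fun y => ENNReal.ofReal (exp ε) * g y) ≤ᵐ[μ.restrict S] f := by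
      refine (ae_restrict_iff' hSm).mpr ?_
      filter_upwards [hgf] with y hy hyS
      obtain ⟨h4, hcf⟩ := hy hyS
      calc ENNReal.ofReal (exp ε) * g y
          ≤ ENNReal.ofReal (exp ε) * ENNReal.ofReal (exp (-ε) * c) := mul_le_mul_right h4 _
        _ = ENNReal.ofReal (exp ε * (exp (-ε) * c)) := (ENNReal.ofReal_mul (exp_pos ε).le).symm
        _ = ENNReal.ofReal c := by rw [← mul_assoc, ← exp_add]; simp
        _ ≤ f y := hcf
    have hfin_g : ∫⁻ y in S, ENNReal.ofReal (exp ε) * g y ∂μ ≠ ⊤ := by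
      rw [lintegral_const_mul _ hgm, Measure.setLIntegral_rnDeriv hQμ]
      exact ENNReal.mul_ne_top ENNReal.ofReal_ne_top (measure_ne_top Q S)
    calc ∫⁻ y in S, ENNReal.ofReal (1 - e y) * f y ∂μ
        ≤ ∫⁻ y in S, (f y - ENNReal.ofReal (exp ε) * g y) ∂μ :=
          lintegral_mono_ae ((ae_restrict_iff' hSm).mpr hsub)
      _ = (∫⁻ y in S, f y ∂μ) - ∫⁻ y in S, ENNReal.ofReal (exp ε) * g y ∂μ :=
          lintegral_sub (measurable_const.mul hgm) hfin_g hle_ae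
      _ = P S - ENNReal.ofReal (exp ε) * Q S := by
          rw [Measure.setLIntegral_rnDeriv hPμ, lintegral_const_mul _ hgm,
            Measure.setLIntegral_rnDeriv hQμ]
      _ ≤ ENNReal.ofReal δ := by
          rw [tsub_le_iff_right, add_comm]
          exact hPQ S hSm
  -- reduce full-space lintegrals to S
  have hind : (fun y => ENNReal.ofReal (1 - e y)) =
      S.indicator (fun y => ENNReal.ofReal (1 - e y)) := by
    funext y
    by_cases hy : y ∈ S
    · rw [Set.indicator_of_mem hy]
    · rw [Set.indicator_of_notMem hy]
      have hyc : (f y).toReal ≤ c := not_lt.mp hy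
      have : e y = 1 := by rw [he]; exact if_pos hyc
      simp [this]
  have h1em : Measurable fun y => ENNReal.ofReal (1 - e y) :=
    (measurable_const.sub hem).ennreal_ofReal
  have hP_main : ∫⁻ y, ENNReal.ofReal (1 - e y) ∂P ≤ ENNReal.ofReal δ := by
    rw [hind, lintegral_indicator hSm _, ← Measure.withDensity_rnDeriv_eq P μ hPμ,
      setLIntegral_withDensity_eq_setLIntegral_mul μ hfm h1em hSm]
    calc ∫⁻ y in S, (f * fun y => ENNReal.ofReal (1 - e y)) y ∂μ
        = ∫⁻ y in S, ENNReal.ofReal (1 - e y) * f y ∂μ := by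
          refine lintegral_congr fun y => ?_
          simp [mul_comm]
      _ ≤ ENNReal.ofReal δ := hL
  have hQ_main : ∫⁻ y, ENNReal.ofReal (1 - e y) ∂Q ≤ ENNReal.ofReal δ := by
    rw [hind, lintegral_indicator hSm _, ← Measure.withDensity_rnDeriv_eq Q μ hQμ,
      setLIntegral_withDensity_eq_setLIntegral_mul μ hgm h1em hSm]
    calc ∫⁻ y in S, (g * fun y => ENNReal.ofReal (1 - e y)) y ∂μ
        ≤ ∫⁻ y in S, ENNReal.ofReal (exp (-ε)) * (ENNReal.ofReal (1 - e y) * f y) ∂μ := by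
          refine lintegral_mono_ae ((ae_restrict_iff' hSm).mpr ?_)
          filter_upwards [hgf] with y hy hyS
          obtain ⟨h4, hcf⟩ := hy hyS
          have hgy : g y ≤ ENNReal.ofReal (exp (-ε)) * f y := by
            refine h4.trans ?_
            rw [ENNReal.ofReal_mul (exp_pos (-ε)).le]
            exact mul_le_mul_right hcf _
          calc (g * fun y => ENNReal.ofReal (1 - e y)) y
              = g y * ENNReal.ofReal (1 - e y) := rfl
            _ ≤ (ENNReal.ofReal (exp (-ε)) * f y) * ENNReal.ofReal (1 - e y) :=
                mul_le_mul_left hgy _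
            _ = ENNReal.ofReal (exp (-ε)) * (ENNReal.ofReal (1 - e y) * f y) := by ring
      _ = ENNReal.ofReal (exp (-ε)) * ∫⁻ y in S, ENNReal.ofReal (1 - e y) * f y ∂μ :=
          lintegral_const_mul _ (h1em.mul hfm)
      _ ≤ ENNReal.ofReal (exp (-ε)) * ENNReal.ofReal δ := mul_le_mul_right hL _
      _ = ENNReal.ofReal (exp (-ε) * δ) := (ENNReal.ofReal_mul (exp_pos _).le).symm
      _ ≤ ENNReal.ofReal δ := by
          refine ENNReal.ofReal_le_ofReal ?_
          have h1 : exp (-ε) ≤ 1 := exp_le_one_iff.mpr (by linarith)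
          nlinarith
  -- convert to Bochner integrals
  have hint : ∀ (ν : Measure Y), IsProbabilityMeasure ν →
      (∫⁻ y, ENNReal.ofReal (1 - e y) ∂ν ≤ ENNReal.ofReal δ) → 1 - δ ≤ ∫ y, e y ∂ν := by
    intro ν hν hbound
    have hintg : Integrable e ν := by
      refine Integrable.mono' (integrable_const 1) hem.aestronglyMeasurable ?_
      refine Filter.Eventually.of_forall fun y => ?_
      rw [Real.norm_eq_abs, abs_le]
      exact ⟨by linarith [(he01 y).1], (he01 y).2⟩
    have h1e : ∫ y, (1 - e y) ∂ν ≤ δ := by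
      rw [integral_eq_lintegral_of_nonneg_ae (f := fun y => 1 - e y)
        (Filter.Eventually.of_forall fun y => by simp only [Pi.zero_apply]; linarith [(he01 y).2])
        ((measurable_const.sub hem).aestronglyMeasurable)]
      exact ENNReal.toReal_le_of_le_ofReal hδ hbound
    have h2 : ∫ y, (1 - e y) ∂ν = 1 - ∫ y, e y ∂ν := by
      rw [integral_sub (integrable_const 1) hintg, integral_const, probReal_univ]
      simp
    linarith [h2 ▸ h1e]
  exact ⟨e, hem, he01, Filter.Eventually.of_forall hcond,
    hint P inferInstance hP_main, hint Q inferInstance hQ_main⟩
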